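/- Let E be a nonzero finite-dimensional complex inner product space, T : E → E a self-adjoint linear map, and μ an eigenvalue of T such that μ ≠ 0 and |ν| < |μ| for every eigenvalue ν of T with ν ≠ μ. Let P denote the orthogonal projection of E onto the eigenspace ker(T − μ·id). Then for every ψ ∈ E, the sequence μ^{−n} • T^n ψ converges to P ψ as n → ∞. -/

import Mathlib

open Filter Module

set_option maxHeartbeats 1000000

/-- Convergence of power iteration: if `μ` is the strictly dominant eigenvalue of a
self-adjoint operator `T` on a nonzero finite-dimensional complex inner product space,
then `μ⁻ⁿ Tⁿ ψ → P ψ`, where `P` is the orthogonal projection onto the `μ`-eigenspace. -/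
theorem power_iteration_tendsto
    {E : Type*} [NormedAddCommGroup E] [InnerProductSpace ℂ E]
    [FiniteDimensional ℂ E] [Nontrivial E]
    (T : Module.End ℂ E) (hT : LinearMap.IsSymmetric T)
    (μ : ℂ) (hμ : Module.End.HasEigenvalue T μ) (hμ0 : μ ≠ 0)
    (hdom : ∀ ν : ℂ, Module.End.HasEigenvalue T ν → ν ≠ μ → ‖ν‖ < ‖μ‖)
    (ψ : E) :
    Filter.Tendsto (fun n : ℕ => (μ ^ n)⁻¹ • ((T ^ n) ψ)) Filter.atTop
      (nhds (((Module.End.eigenspace T μ).orthogonalProjectionOnto ψ : E))) := by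
  classical
  set d := hT.diagonalization with hd
  set μ' : Module.End.Eigenvalues T := ⟨μ, hμ⟩ with hμ'
  -- diagonal action of powers
  have hpow : ∀ (n : ℕ) (ν : Module.End.Eigenvalues T),
      d ((T ^ n) ψ) ν = ((ν : ℂ) ^ n) • d ψ ν := by
    intro n
    induction n with
    | zero => intro ν; simp
    | succ n ih =>
      intro ν
      have : (T ^ (n + 1)) ψ = T ((T ^ n) ψ) := by
        rw [pow_succ']; rfl
      rw [this, hd, hT.diagonalization_apply_self_apply, ← hd, ih, smul_smul, ← pow_succ']
  -- expand the iterate as a sum over eigenvalues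
  have hsum : ∀ n : ℕ, (μ ^ n)⁻¹ • ((T ^ n) ψ) =
      ∑ ν : Module.End.Eigenvalues T, ((μ ^ n)⁻¹ * (ν : ℂ) ^ n) • ((d ψ ν : E)) := by
    intro n
    have h1 : (T ^ n) ψ = ∑ ν : Module.End.Eigenvalues T, ((d ((T ^ n) ψ) ν : E)) := by
      conv_lhs => rw [← d.symm_apply_apply ((T ^ n) ψ)]
      rw [hd, hT.diagonalization_symm_apply]
    rw [h1, Finset.smul_sum]
    refine Finset.sum_congr rfl fun ν _ => ?_
    rw [hpow n ν, Submodule.coe_smul, smul_smul]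
  simp only [hsum]
  -- the limit of each term
  have hterm : ∀ ν : Module.End.Eigenvalues T,
      Tendsto (fun n : ℕ => ((μ ^ n)⁻¹ * (ν : ℂ) ^ n) • ((d ψ ν : E))) atTop
        (nhds (if ν = μ' then ((d ψ ν : E)) else 0)) := by
    intro ν
    by_cases hν : ν = μ'
    · rw [if_pos hν]
      have hval : (ν : ℂ) = μ := congrArg Subtype.val hν
      have heq : ∀ n : ℕ, ((μ ^ n)⁻¹ * (ν : ℂ) ^ n) • ((d ψ ν : E)) = (d ψ ν : E) := by
        intro n
        have h1 : (μ ^ n)⁻¹ * (ν : ℂ) ^ n = 1 := by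
          rw [hval, inv_mul_cancel₀ (pow_ne_zero n hμ0)]
        rw [h1, one_smul]
      simp only [heq]
      exact tendsto_const_nhds
    · simp only [if_neg hν]
      have hne : (ν : ℂ) ≠ μ := by
        intro h; exact hν (Subtype.ext h)
      have hlt : ‖(ν : ℂ) * μ⁻¹‖ < 1 := by
        rw [norm_mul, norm_inv]
        have hμpos : 0 < ‖μ‖ := norm_pos_iff.mpr hμ0
        rw [mul_inv_lt_iff₀ hμpos, one_mul]
        exact hdom ν ν.2 hne
      have h0 : Tendsto (fun n : ℕ => ((ν : ℂ) * μ⁻¹) ^ n) atTop (nhds 0) :=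
        tendsto_pow_atTop_nhds_zero_of_norm_lt_one hlt
      have := h0.smul_const ((d ψ ν : E))
      rw [zero_smul] at this
      convert this using 2 with n
      rw [mul_pow, inv_pow, mul_comm]
  have htot := tendsto_finset_sum (Finset.univ : Finset (Module.End.Eigenvalues T))
    (fun ν _ => hterm ν)
  rw [Finset.sum_ite_eq' Finset.univ μ' (fun ν => ((d ψ ν : E))), if_pos (Finset.mem_univ μ')]
    at htot
  -- identify d ψ μ' with the orthogonal projection
  have hproj : (d ψ μ' : E) = ((Module.End.eigenspace T μ).orthogonalProjectionOnto ψ : E) := by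
    have hmemK : (d ψ μ' : E) ∈ Module.End.eigenspace T μ := (d ψ μ').2
    have hdecomp : ψ = ∑ ν : Module.End.Eigenvalues T, ((d ψ ν : E)) := by
      conv_lhs => rw [← d.symm_apply_apply ψ]
      rw [hd, hT.diagonalization_symm_apply]
    have hperp : ψ - (d ψ μ' : E) ∈ (Module.End.eigenspace T μ)ᗮ := by
      have hrest : ψ - (d ψ μ' : E) = ∑ ν ∈ Finset.univ.erase μ', ((d ψ ν : E)) := by
        nth_rewrite 1 [hdecomp]
        rw [← Finset.sum_erase_add _ _ (Finset.mem_univ μ'), add_sub_cancel_right]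
      rw [hrest]
      refine Submodule.sum_mem _ fun ν hν => ?_
      have hν' : ν ≠ μ' := Finset.ne_of_mem_erase hν
      rw [Submodule.mem_orthogonal]
      intro u hu
      have := hT.orthogonalFamily_eigenspaces' (Ne.symm hν') ⟨u, hu⟩ (d ψ ν)
      simpa using this
    rw [← Submodule.starProjection_apply]
    exact (Submodule.eq_starProjection_of_mem_orthogonal hmemK hperp).symm
  rw [hproj] at htot
  exact htot
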